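/- arXiv:2107.01906 — 6 statements merged into one kernel-verified Lean document; each statement's English description precedes it below -/
import Mathlib

section
/- Let a : ℕ → ℝ be a sequence of non-negative reals, γ : ℕ → ℝ a sequence of positive reals, and α > 0. If for all t in {1,...,T-1} we have a_{t+1} ≤ a_t − γ_t · a_t^{1+α}, then a_T ≤ a_1 / (1 + α · a_1^α · Σ_{t=1}^{T−1} γ_t)^{1/α}. -/
open Finset

private lemma polyak_key {u v g α : ℝ} (hu : 0 < u) (hv : 0 < v) (hg : 0 < g) (hα : 0 < α)
    (h : v ≤ u - g * u ^ (1 + α)) : u ^ (-α) + α * g ≤ v ^ (-α) := by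
  have hu1a : (0:ℝ) < u ^ (1 + α) := Real.rpow_pos_of_pos hu _
  have h1 : g * u ^ (1 + α) ≤ u - v := by linarith
  -- Bernoulli with t = u / v
  set t : ℝ := u / v with ht
  have htpos : 0 < t := div_pos hu hv
  have hb : 1 + (1 + α) * (t - 1) ≤ (1 + (t - 1)) ^ (1 + α) :=
    one_add_mul_self_le_rpow_one_add (by linarith) (by linarith)
  rw [add_sub_cancel] at hb
  have htpow : t ^ (1 + α) = u ^ (1 + α) * v ^ (-(1 + α)) := by
    rw [ht, Real.div_rpow hu.le hv.le, div_eq_mul_inv, ← Real.rpow_neg hv.le]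
  -- multiply Bernoulli by v
  have hvv : v ^ (-(1 + α)) * v = v ^ (-α) := by
    rw [← Real.rpow_add_one hv.ne']
    congr 1; ring
  have h2 : ((1 + α) * u - α * v) ≤ u ^ (1 + α) * v ^ (-α) := by
    have hmul := mul_le_mul_of_nonneg_right hb hv.le
    rw [htpow] at hmul
    calc (1 + α) * u - α * v = ((1 + (1 + α) * (t - 1))) * v := by
            rw [ht]; field_simp; ring
      _ ≤ u ^ (1 + α) * v ^ (-(1 + α)) * v := hmul
      _ = u ^ (1 + α) * v ^ (-α) := by rw [mul_assoc, hvv]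
  -- multiply by u ^ (-(1+α))
  have hui : (0:ℝ) < u ^ (-(1 + α)) := Real.rpow_pos_of_pos hu _
  have huu : u ^ (1 + α) * u ^ (-(1 + α)) = 1 := by
    rw [← Real.rpow_add hu, show (1 + α) + -(1 + α) = 0 by ring, Real.rpow_zero]
  have huone : u ^ (-(1 + α)) * u = u ^ (-α) := by
    rw [← Real.rpow_add_one hu.ne']
    congr 1; ring
  have h3 := mul_le_mul_of_nonneg_right h2 hui.le
  have h4 : g ≤ (u - v) * u ^ (-(1 + α)) := by
    have := mul_le_mul_of_nonneg_right h1 hui.le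
    rw [mul_assoc, huu, mul_one] at this
    linarith
  nlinarith [h3, h4, huone, huu, mul_pos hv hui]

/-- Polyak's lemma on decreasing sequences (Polyak, §2.2, Lemma 6). -/
theorem polyak_sequence_lemma
    (a γ : ℕ → ℝ) (α : ℝ) (T : ℕ)
    (hT : 1 ≤ T)
    (ha : ∀ t, 0 ≤ a t)
    (hγ : ∀ t, 0 < γ t)
    (hα : 0 < α)
    (hrec : ∀ t, 1 ≤ t → t ≤ T - 1 → a (t + 1) ≤ a t - γ t * a t ^ (1 + α)) :
    a T ≤ a 1 / (1 + α * a 1 ^ α * ∑ t ∈ Finset.Icc 1 (T - 1), γ t) ^ (1 / α) := by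
  have hA1 : (0:ℝ) ≤ a 1 ^ α := Real.rpow_nonneg (ha 1) α
  -- main induction
  have main : ∀ m : ℕ, m + 1 ≤ T →
      a (m + 1) ^ α * (1 + α * a 1 ^ α * ∑ s ∈ Finset.Icc 1 m, γ s) ≤ a 1 ^ α := by
    intro m
    induction m with
    | zero => intro _; simp
    | succ n ih =>
      intro hn2
      have hn1 : n + 1 ≤ T := by omega
      have ihn := ih hn1
      have hSsum : ∑ s ∈ Finset.Icc 1 (n + 1), γ s
          = (∑ s ∈ Finset.Icc 1 n, γ s) + γ (n + 1) :=
        Finset.sum_Icc_succ_top (by omega) γ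
      set S := ∑ s ∈ Finset.Icc 1 n, γ s with hS
      have hSnn : 0 ≤ S := Finset.sum_nonneg fun i _ => (hγ i).le
      have hrecn : a (n + 2) ≤ a (n + 1) - γ (n + 1) * a (n + 1) ^ (1 + α) :=
        hrec (n + 1) (by omega) (by omega)
      rcases eq_or_lt_of_le (ha (n + 2)) with h0 | hpos
      · rw [show n + 1 + 1 = n + 2 by rfl, ← h0, Real.zero_rpow hα.ne', zero_mul]
        exact hA1
      · have hprev : 0 < a (n + 1) := by
          rcases eq_or_lt_of_le (ha (n + 1)) with h0' | h
          · exfalso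
            rw [← h0', Real.zero_rpow (by positivity : (1:ℝ) + α ≠ 0)] at hrecn
            simp at hrecn
            linarith
          · exact h
        have hkey := polyak_key hprev hpos (hγ (n + 1)) hα hrecn
        have hx : 0 < a (n + 2) ^ α := Real.rpow_pos_of_pos hpos α
        have hy : 0 < a (n + 1) ^ α := Real.rpow_pos_of_pos hprev α
        have hxinv : a (n + 2) ^ (-α) = (a (n + 2) ^ α)⁻¹ := Real.rpow_neg (ha _) α
        have hyinv : a (n + 1) ^ (-α) = (a (n + 1) ^ α)⁻¹ := Real.rpow_neg (ha _) α
        rw [hxinv, hyinv] at hkey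
        rw [show n + 1 + 1 = n + 2 by rfl, hSsum]
        set x := a (n + 2) ^ α
        set y := a (n + 1) ^ α
        set A := a 1 ^ α
        have hDnn : 0 ≤ α * A * S := mul_nonneg (mul_nonneg hα.le hA1) hSnn
        have hApos : 0 < A := lt_of_lt_of_le (mul_pos hy (by linarith)) ihn
        set D := 1 + α * A * S with hDdef
        have hxx : x * x⁻¹ = 1 := mul_inv_cancel₀ hx.ne'
        have hyy : y * y⁻¹ = 1 := mul_inv_cancel₀ hy.ne'
        set g := γ (n + 1) with hgdef
        have hg : 0 < g := hγ (n + 1)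
        have hb : D ≤ A * y⁻¹ := by
          have h' := mul_le_mul_of_nonneg_right ihn (inv_pos.mpr hy).le
          rw [mul_comm y D, mul_assoc, hyy, mul_one] at h'
          exact h'
        have hd : D + A * (α * g) ≤ A * x⁻¹ := by
          have hc := mul_le_mul_of_nonneg_left hkey hApos.le
          rw [mul_add] at hc
          linarith
        have he := mul_le_mul_of_nonneg_left hd hx.le
        have hf : x * (A * x⁻¹) = A := by
          field_simp
        rw [hf] at he
        have hgoal : x * (1 + α * A * (S + g)) = x * (D + A * (α * g)) := by
          rw [hDdef]; ring
        linarith [he, hgoal.le, hgoal.ge]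
  obtain ⟨m, rfl⟩ : ∃ m, T = m + 1 := ⟨T - 1, by omega⟩
  have hmain := main m (le_refl _)
  simp only [Nat.add_sub_cancel]
  set S := ∑ s ∈ Finset.Icc 1 m, γ s with hS
  have hSnn : 0 ≤ S := Finset.sum_nonneg fun i _ => (hγ i).le
  have hDnn : 0 ≤ α * a 1 ^ α * S := mul_nonneg (mul_nonneg hα.le hA1) hSnn
  have hD : 0 < 1 + α * a 1 ^ α * S := by linarith
  have h1 : a (m + 1) ^ α ≤ a 1 ^ α / (1 + α * a 1 ^ α * S) :=
    (le_div_iff₀ hD).mpr hmain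
  have h2 := Real.rpow_le_rpow (Real.rpow_nonneg (ha _) α) h1 (by positivity : (0:ℝ) ≤ 1/α)
  rw [one_div, Real.rpow_rpow_inv (ha _) hα.ne'] at h2
  rw [Real.div_rpow hA1 hD.le, Real.rpow_rpow_inv (ha 1) hα.ne'] at h2
  rw [one_div]
  exact h2
end

section
/- Let a : ℕ → ℝ be non-negative, q, q' > 0, t₀ ≥ 0, and 1/2 < p < 1. If for all t ≥ 1, a_{t+1} ≤ (1 − q/(t+t₀)^p) · a_t + q'/(t+t₀)^{2p}, then a_T = O(1/T^p) as T → ∞. -/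
set_option maxHeartbeats 1600000


open Filter Asymptotics

/-- Chung's Lemma 4 (Chung 1954). -/
theorem chung_lemma_4
    (a : ℕ → ℝ) (q q' t₀ p : ℝ)
    (ha : ∀ t, 0 ≤ a t)
    (hq : 0 < q) (hq' : 0 < q') (ht₀ : 0 ≤ t₀)
    (hp1 : 1 / 2 < p) (hp2 : p < 1)
    (hrec : ∀ t : ℕ, 1 ≤ t →
      a (t + 1) ≤ (1 - q / ((t : ℝ) + t₀) ^ p) * a t + q' / ((t : ℝ) + t₀) ^ (2 * p)) :
    (fun T : ℕ => a T) =O[atTop] (fun T : ℕ => 1 / (T : ℝ) ^ p) := by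
  have hp0 : 0 < p := by linarith
  -- choose a threshold N
  have hTend1 : Tendsto (fun n : ℕ => (n : ℝ) ^ (1 - p)) atTop atTop :=
    (tendsto_rpow_atTop (by linarith)).comp tendsto_natCast_atTop_atTop
  have hTend2 : Tendsto (fun n : ℕ => (n : ℝ) ^ p) atTop atTop :=
    (tendsto_rpow_atTop hp0).comp tendsto_natCast_atTop_atTop
  obtain ⟨N, hN⟩ := ((hTend1.eventually_ge_atTop (2 * p / q)).and
    ((hTend2.eventually_ge_atTop q).and (eventually_ge_atTop 1))).exists
  obtain ⟨hN1, hN2, hN3⟩ := hN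
  have hN0 : (1 : ℝ) ≤ (N : ℝ) := by exact_mod_cast hN3
  set C : ℝ := max (2 * q' / q) (a N * ((N : ℝ) + t₀) ^ p) with hCdef
  have hC1 : 2 * q' / q ≤ C := le_max_left _ _
  have hC0 : 0 < C := lt_of_lt_of_le (by positivity) hC1
  -- the main induction
  have hind : ∀ t : ℕ, N ≤ t → a t ≤ C / ((t : ℝ) + t₀) ^ p := by
    intro t ht
    induction t, ht using Nat.le_induction with
    | base =>
      have hpos : (0 : ℝ) < ((N : ℝ) + t₀) ^ p :=
        Real.rpow_pos_of_pos (by linarith) p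
      rw [le_div_iff₀ hpos]
      exact le_max_right _ _
    | succ t ht IH =>
      set s : ℝ := (t : ℝ) + t₀ with hsdef
      have hts : (N : ℝ) ≤ s := by
        have h : (N : ℝ) ≤ (t : ℝ) := by exact_mod_cast ht
        rw [hsdef]; linarith
      have hs1 : (1 : ℝ) ≤ s := le_trans hN0 hts
      have hs0 : (0 : ℝ) < s := by linarith
      set A : ℝ := s ^ p with hAdef
      set B : ℝ := s ^ (1 - p) with hBdef
      set D : ℝ := (s + 1) ^ p with hDdef
      have hA : 0 < A := Real.rpow_pos_of_pos hs0 p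
      have hD : 0 < D := Real.rpow_pos_of_pos (by linarith) p
      have hAB : A * B = s := by
        rw [hAdef, hBdef, ← Real.rpow_add hs0]
        norm_num
      have hqA : q ≤ A :=
        le_trans hN2 (Real.rpow_le_rpow (Nat.cast_nonneg N) hts hp0.le)
      have hB : 2 * p / q ≤ B :=
        le_trans hN1 (Real.rpow_le_rpow (Nat.cast_nonneg N) hts (by linarith))
      have hAD : A ≤ D := Real.rpow_le_rpow hs0.le (by linarith) hp0.le
      -- Bernoulli bound
      have hBern : D ≤ A * (1 + p * (1 / s)) := by
        have hrw : s + 1 = s * (1 + 1 / s) := by field_simp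
        have h0 : (0 : ℝ) ≤ 1 / s := by positivity
        have hm1 : (-1 : ℝ) ≤ 1 / s := by linarith
        have h1 : (1 + 1 / s) ^ p ≤ 1 + p * (1 / s) :=
          rpow_one_add_le_one_add_mul_self hm1 hp0.le hp2.le
        calc D = (s * (1 + 1 / s)) ^ p := by rw [hDdef, hrw]
          _ = s ^ p * (1 + 1 / s) ^ p := Real.mul_rpow hs0.le (by positivity)
          _ ≤ A * (1 + p * (1 / s)) := mul_le_mul_of_nonneg_left h1 hA.le
      have hBern' : D * s ≤ A * s + p * A := by
        have h2 := mul_le_mul_of_nonneg_right hBern hs0.le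
        calc D * s ≤ A * (1 + p * (1 / s)) * s := h2
          _ = A * s + p * A := by field_simp
      have h2p : s ^ (2 * p) = A * A := by
        rw [two_mul, Real.rpow_add hs0]
      have hB' : 2 * p ≤ q * B := by
        rw [div_le_iff₀ hq] at hB; linarith
      have hC' : 2 * q' ≤ q * C := by
        rw [div_le_iff₀ hq] at hC1; linarith
      -- the recurrence
      have hrect := hrec t (hN3.trans ht)
      rw [← hsdef, ← hAdef, h2p] at hrect
      have hnn : 0 ≤ 1 - q / A := by
        rw [sub_nonneg, div_le_one hA]; exact hqA
      have step1 : a (t + 1) ≤ (1 - q / A) * (C / A) + q' / (A * A) :=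
        le_trans hrect (add_le_add_left (mul_le_mul_of_nonneg_left IH hnn) _)
      -- key algebraic inequality
      have hkey : 2 * p * A ≤ q * s := by
        have h3 := mul_le_mul_of_nonneg_right hB' hA.le
        have h4 : q * B * A = q * s := by rw [← hAB]; ring
        linarith
      have key2 : ((A - q) * C + q') * D ≤ C * (A * A) := by
        have e1 : (A - q) * C + q' ≤ C * (A - q / 2) := by nlinarith [hC']
        have e0 : 0 ≤ (A - q) * C + q' := by nlinarith [mul_nonneg (by linarith : (0:ℝ) ≤ A - q) hC0.le]
        have e3 : ((A - q) * C + q') * (D * s) ≤ C * (A - q / 2) * (A * s + p * A) :=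
          mul_le_mul e1 hBern' (by positivity) (by nlinarith [mul_pos hC0 hq])
        have e4 : C * (A - q / 2) * (A * s + p * A) ≤ C * (A * A) * s := by
          have h5 := mul_le_mul_of_nonneg_left hkey (mul_nonneg hC0.le hA.le)
          nlinarith [h5, mul_nonneg (mul_nonneg (mul_nonneg hC0.le hA.le) hq.le) hp0.le]
        have e5 : ((A - q) * C + q') * D * s ≤ C * (A * A) * s := by
          calc ((A - q) * C + q') * D * s = ((A - q) * C + q') * (D * s) := by ring
            _ ≤ C * (A - q / 2) * (A * s + p * A) := e3
            _ ≤ C * (A * A) * s := e4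
        exact le_of_mul_le_mul_right e5 hs0
      have hfin : (1 - q / A) * (C / A) + q' / (A * A) ≤ C / D := by
        have heq : (1 - q / A) * (C / A) + q' / (A * A) = ((A - q) * C + q') / (A * A) := by
          field_simp
        rw [heq, div_le_div_iff₀ (by positivity) hD]
        linarith [key2]
      have hcast : ((↑(t + 1) : ℝ) + t₀) = s + 1 := by push_cast; rw [hsdef]; ring
      rw [hcast]
      show a (t + 1) ≤ C / D
      exact le_trans step1 hfin
  -- conclude
  rw [isBigO_iff]
  refine ⟨C, ?_⟩
  filter_upwards [eventually_ge_atTop (max N 1)] with T hT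
  have hTN : N ≤ T := le_trans (le_max_left _ _) hT
  have hT1 : 1 ≤ T := le_trans (le_max_right _ _) hT
  have hT1' : (1 : ℝ) ≤ (T : ℝ) := by exact_mod_cast hT1
  have hTp : 0 < (T : ℝ) ^ p := Real.rpow_pos_of_pos (by linarith) p
  have h1 : a T ≤ C / ((T : ℝ) + t₀) ^ p := hind T hTN
  have h2 : (T : ℝ) ^ p ≤ ((T : ℝ) + t₀) ^ p :=
    Real.rpow_le_rpow (by linarith) (by linarith) hp0.le
  have h3 : C / ((T : ℝ) + t₀) ^ p ≤ C / (T : ℝ) ^ p :=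
    div_le_div_of_nonneg_left hC0.le hTp h2
  rw [Real.norm_eq_abs, Real.norm_eq_abs, abs_of_nonneg (ha T),
    abs_of_nonneg (by positivity)]
  calc a T ≤ C / (T : ℝ) ^ p := le_trans h1 h3
    _ = C * (1 / (T : ℝ) ^ p) := by ring
end

section
/- Let a : ℕ → ℝ be non-negative, q > 1, q' > 0, t₀ ≥ 0. If for all t ≥ 1, a_{t+1} ≤ (1 − q/(t+t₀)) · a_t + q'/(t+t₀)², then a_T ≤ q'/((q−1)(T+t₀)) + o(1/T). -/
open Filter Asymptotics

/-- Chung's Lemma 1 (Chung 1954). -/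
theorem chung_lemma_1
    (a : ℕ → ℝ) (q q' t₀ : ℝ)
    (ha : ∀ t, 0 ≤ a t)
    (hq : 1 < q) (hq' : 0 < q') (ht₀ : 0 ≤ t₀)
    (hrec : ∀ t : ℕ, 1 ≤ t →
      a (t + 1) ≤ (1 - q / ((t : ℝ) + t₀)) * a t + q' / ((t : ℝ) + t₀) ^ 2) :
    ∃ e : ℕ → ℝ, (e =o[atTop] fun T : ℕ => 1 / (T : ℝ)) ∧
      ∀ T : ℕ, 1 ≤ T → a T ≤ q' / ((q - 1) * ((T : ℝ) + t₀)) + e T := by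
  have hq1 : (0:ℝ) < q - 1 := by linarith
  set b : ℕ → ℝ := fun t => q' / ((q - 1) * ((t : ℝ) + t₀)) with hb
  set c : ℕ → ℝ := fun t => max (a t - b t) 0 with hc
  have hcnn : ∀ t, 0 ≤ c t := fun t => le_max_right _ _
  have hs : ∀ t : ℕ, 1 ≤ t → (0:ℝ) < (t:ℝ) + t₀ := by
    intro t ht
    have : (1:ℝ) ≤ t := by exact_mod_cast ht
    linarith
  -- key recursion for a - b
  have hkey : ∀ t : ℕ, 1 ≤ t →
      a (t+1) - b (t+1) ≤ (1 - q / ((t:ℝ)+t₀)) * (a t - b t) := by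
    intro t ht
    have hs0 := hs t ht
    have hs1 : (0:ℝ) < (t:ℝ) + t₀ + 1 := by linarith
    have h1 := hrec t ht
    have h2 : (1 - q / ((t:ℝ)+t₀)) * b t + q' / ((t:ℝ)+t₀)^2 ≤ b (t+1) := by
      simp only [hb]
      push_cast
      rw [← sub_nonneg]
      have heq : q' / ((q-1) * ((t:ℝ) + 1 + t₀)) -
          ((1 - q / ((t:ℝ)+t₀)) * (q' / ((q - 1) * ((t:ℝ) + t₀))) + q' / ((t:ℝ)+t₀)^2)
          = q' / ((q-1) * ((t:ℝ)+t₀)^2 * ((t:ℝ)+t₀+1)) := by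
        field_simp
        ring
      rw [heq]
      positivity
    nlinarith [h1, h2]
  -- threshold
  set N : ℕ := max 1 ⌈q⌉₊ with hN
  have hN1 : 1 ≤ N := le_max_left _ _
  have hNq : q ≤ (N:ℝ) := by
    have h1 : q ≤ (⌈q⌉₊ : ℝ) := Nat.le_ceil q
    have h2 : (⌈q⌉₊ : ℝ) ≤ (N:ℝ) := by exact_mod_cast le_max_right 1 ⌈q⌉₊
    linarith
  have hfac : ∀ t : ℕ, N ≤ t → 0 ≤ 1 - q / ((t:ℝ)+t₀) := by
    intro t htN
    have ht1 : 1 ≤ t := le_trans hN1 htN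
    have hs0 := hs t ht1
    have hqs : q ≤ (t:ℝ) + t₀ := by
      have : (N:ℝ) ≤ (t:ℝ) := by exact_mod_cast htN
      linarith
    have : q / ((t:ℝ)+t₀) ≤ 1 := (div_le_one hs0).mpr hqs
    linarith
  have hcrec : ∀ t : ℕ, N ≤ t → c (t+1) ≤ (1 - q / ((t:ℝ)+t₀)) * c t := by
    intro t htN
    have ht1 : 1 ≤ t := le_trans hN1 htN
    have hf := hfac t htN
    refine max_le ?_ (mul_nonneg hf (hcnn t))
    calc a (t+1) - b (t+1) ≤ (1 - q / ((t:ℝ)+t₀)) * (a t - b t) := hkey t ht1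
      _ ≤ (1 - q / ((t:ℝ)+t₀)) * c t := by
        apply mul_le_mul_of_nonneg_left (le_max_left _ _) hf
  set K : ℝ := c N * ((N:ℝ) + t₀) ^ q with hK
  have hNs : (0:ℝ) < (N:ℝ) + t₀ := hs N hN1
  have hKnn : 0 ≤ K := mul_nonneg (hcnn N) (Real.rpow_pos_of_pos hNs q).le
  -- main decay estimate
  have hmain : ∀ t : ℕ, N ≤ t → c t ≤ K / ((t:ℝ) + t₀) ^ q := by
    intro t htN
    induction t, htN using Nat.le_induction with
    | base =>
      rw [hK, mul_div_assoc, div_self (ne_of_gt (Real.rpow_pos_of_pos hNs q)), mul_one]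
    | succ t htN ih =>
      have ht1 : 1 ≤ t := le_trans hN1 htN
      have hs0 := hs t ht1
      set s : ℝ := (t:ℝ) + t₀ with hsdef
      have hs1 : (0:ℝ) < s + 1 := by linarith
      have hf := hfac t htN
      -- Bernoulli: (s/(s+1))^q ≥ 1 - q/(s+1)
      have hbern : 1 - q / (s+1) ≤ (s / (s+1)) ^ q := by
        have h := one_add_mul_self_le_rpow_one_add
          (by rw [neg_le, neg_neg]; exact (div_le_one hs1).mpr (by linarith) : (-1:ℝ) ≤ -(1/(s+1))) hq.le
        have he : (1:ℝ) + -(1/(s+1)) = s / (s+1) := by field_simp; ring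
        rw [he] at h
        calc 1 - q / (s+1) = 1 + q * -(1/(s+1)) := by ring
          _ ≤ (s/(s+1)) ^ q := h
      have hstep : (1 - q / s) * (K / s ^ q) ≤ K / (s + 1) ^ q := by
        have h1 : 1 - q / s ≤ 1 - q / (s+1) := by
          have : q / (s+1) ≤ q / s := by
            apply div_le_div_of_nonneg_left (by linarith) hs0 (by linarith)
          linarith
        have h2 : (1 - q/s) ≤ s ^ q / (s+1) ^ q := by
          rw [← Real.div_rpow hs0.le hs1.le]
          linarith [hbern]
        have h3 : (1 - q/s) * (K / s ^ q) ≤ (s ^ q / (s+1) ^ q) * (K / s ^ q) :=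
          mul_le_mul_of_nonneg_right h2 (div_nonneg hKnn (Real.rpow_pos_of_pos hs0 q).le)
        calc (1 - q/s) * (K / s ^ q) ≤ (s ^ q / (s+1) ^ q) * (K / s ^ q) := h3
          _ = K / (s+1) ^ q := by
            field_simp
      have hcast : ((t+1 : ℕ):ℝ) + t₀ = s + 1 := by push_cast; ring
      rw [hcast]
      calc c (t+1) ≤ (1 - q / s) * c t := hcrec t htN
        _ ≤ (1 - q / s) * (K / s ^ q) := mul_le_mul_of_nonneg_left ih hf
        _ ≤ K / (s+1) ^ q := hstep
  refine ⟨c, ?_, ?_⟩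
  · -- c =o[atTop] 1/T
    rw [isLittleO_iff]
    intro ε hε
    have htend : Tendsto (fun T : ℕ => ((T:ℝ)) ^ (q-1)) atTop atTop :=
      (tendsto_rpow_atTop (by linarith : 0 < q - 1)).comp tendsto_natCast_atTop_atTop
    have hev : ∀ᶠ T : ℕ in atTop, K / ε ≤ ((T:ℝ)) ^ (q-1) :=
      htend.eventually_ge_atTop (K / ε)
    filter_upwards [hev, eventually_ge_atTop N, eventually_ge_atTop 1] with T hT hTN hT1
    have hT0 : (0:ℝ) < (T:ℝ) := by exact_mod_cast hT1
    have hTq : (0:ℝ) < (T:ℝ) ^ q := Real.rpow_pos_of_pos hT0 q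
    have hbound : c T ≤ K / ((T:ℝ)) ^ q := by
      calc c T ≤ K / ((T:ℝ) + t₀) ^ q := hmain T hTN
        _ ≤ K / ((T:ℝ)) ^ q := by
          apply div_le_div_of_nonneg_left hKnn hTq
          exact Real.rpow_le_rpow hT0.le (by linarith) (by linarith)
    have hKe : K ≤ ε * ((T:ℝ)) ^ (q-1) := by
      rw [div_le_iff₀ hε] at hT
      linarith [hT]
    have h5 : K / ((T:ℝ)) ^ q ≤ ε * (1 / (T:ℝ)) := by
      rw [div_le_iff₀ hTq]
      have : ε * (1 / (T:ℝ)) * (T:ℝ) ^ q = ε * ((T:ℝ) ^ q / (T:ℝ)) := by ring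
      rw [this]
      have hqq : ((T:ℝ)) ^ q / (T:ℝ) = ((T:ℝ)) ^ (q-1) := by
        rw [Real.rpow_sub hT0, Real.rpow_one]
      rw [hqq]
      exact hKe
    have hcT : ‖c T‖ = c T := Real.norm_of_nonneg (hcnn T)
    rw [hcT, Real.norm_eq_abs, abs_of_pos (by positivity : (0:ℝ) < 1/(T:ℝ))]
    linarith [hbound, h5]
  · intro T hT1
    have : a T - b T ≤ c T := le_max_left _ _
    simp only [hb] at this ⊢
    linarith
end

section
/- For the Tsallis distance-generating function h(x) = −(1/(q(1−q)))·(x^q + (1−x)^q) on [0,1] with q ∈ (0,1) ∪ (1,2), the Bregman divergence at the boundary point 0 satisfies D(0,x) = Θ(x^{min(q,2)}) as x → 0⁺; consequently the Legendre exponent of h at 0 is max(0, 1 − q/2). -/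
open Real


noncomputable def Tq (q x : ℝ) : ℝ :=
  -(1/(q*(1-q))) * (1 - (1-x)^q - q*(1-x)^(q-1)*x)

lemma Tq_hasDerivAt (q : ℝ) (hq0 : 0 < q) (hq1 : q ≠ 1) {x : ℝ} (hx : x < 1) :
    HasDerivAt (Tq q) (x * (1-x)^(q-2)) x := by
  have hpos : (0:ℝ) < 1 - x := by linarith
  have h0 : HasDerivAt (fun y : ℝ => 1 - y) (-1) x := (hasDerivAt_id x).const_sub 1
  have h1 : HasDerivAt (fun y : ℝ => (1-y)^q) (q * (1-x)^(q-1) * (-1)) x :=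
    (Real.hasDerivAt_rpow_const (Or.inl hpos.ne')).comp x h0
  have h2 : HasDerivAt (fun y : ℝ => (1-y)^(q-1)) ((q-1) * (1-x)^(q-1-1) * (-1)) x :=
    (Real.hasDerivAt_rpow_const (Or.inl hpos.ne')).comp x h0
  have h3 : HasDerivAt (fun y : ℝ => q*(1-y)^(q-1)*y)
      (q * ((q-1) * (1-x)^(q-1-1) * (-1)) * x + q*(1-x)^(q-1) * 1) x :=
    (h2.const_mul q).mul (hasDerivAt_id x)
  have h4 := ((h1.const_sub 1).sub h3).const_mul (-(1/(q*(1-q))))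
  have hq1' : 1 - q ≠ 0 := by intro h; apply hq1; linarith
  have he : q - 1 - 1 = q - 2 := by ring
  rw [he] at h4
  refine HasDerivAt.congr_deriv (f := Tq q) h4 ?_
  field_simp
  ring

lemma Tq_bounds (q : ℝ) (hq0 : 0 < q) (hq2 : q < 2) (hq1 : q ≠ 1) :
    ∀ x ∈ Set.Icc (0:ℝ) (1/2), 0 ≤ Tq q x ∧ Tq q x ≤ 2*x^2 := by
  have hder : ∀ x ∈ Set.Icc (0:ℝ) (1/2), HasDerivAt (Tq q) (x * (1-x)^(q-2)) x := by
    intro x hx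
    exact Tq_hasDerivAt q hq0 hq1 (by linarith [hx.2])
  have hcont : ContinuousOn (Tq q) (Set.Icc (0:ℝ) (1/2)) := fun x hx =>
    ((hder x hx).continuousAt).continuousWithinAt
  have hT0 : Tq q 0 = 0 := by simp [Tq]
  have hrbound : ∀ x ∈ Set.Icc (0:ℝ) (1/2), (1-x)^(q-2) ≤ 4 := by
    intro x hx
    have h1 : (1:ℝ)/2 ≤ 1 - x := by linarith [hx.2]
    have h2 : ((1:ℝ)/2) ^ (2-q) ≤ (1-x)^(2-q) :=
      Real.rpow_le_rpow (by norm_num) h1 (by linarith)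
    have h3 : ((1:ℝ)/2) ^ (2:ℝ) ≤ ((1:ℝ)/2) ^ (2-q) :=
      Real.rpow_le_rpow_of_exponent_ge (by norm_num) (by norm_num) (by linarith)
    have h25 : ((1:ℝ)/2) ^ (2:ℝ) = 1/4 := by
      rw [show (2:ℝ) = ((2:ℕ):ℝ) by norm_num, Real.rpow_natCast]; norm_num
    have h4 : (1/4 : ℝ) ≤ (1-x)^(2-q) := by rw [← h25]; exact le_trans h3 h2
    have h5 : (1-x)^(q-2) = ((1-x)^(2-q))⁻¹ := by
      rw [show q-2 = -(2-q) by ring, Real.rpow_neg (by linarith)]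
    rw [h5]
    calc ((1-x)^(2-q))⁻¹ ≤ ((1/4:ℝ))⁻¹ := by
          apply inv_anti₀ (by norm_num) h4
      _ = 4 := by norm_num
  -- T is monotone on Icc, hence nonneg
  have hmonoT : MonotoneOn (Tq q) (Set.Icc (0:ℝ) (1/2)) := by
    apply monotoneOn_of_deriv_nonneg (convex_Icc _ _) hcont
    · intro x hx
      rw [interior_Icc] at hx
      exact ((hder x ⟨hx.1.le, hx.2.le⟩).differentiableAt).differentiableWithinAt
    · intro x hx
      rw [interior_Icc] at hx
      rw [(hder x ⟨hx.1.le, hx.2.le⟩).deriv]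
      exact mul_nonneg hx.1.le (Real.rpow_nonneg (by linarith [hx.2]) _)
  have hmonoF : MonotoneOn (fun y => 2*y^2 - Tq q y) (Set.Icc (0:ℝ) (1/2)) := by
    apply monotoneOn_of_deriv_nonneg (convex_Icc _ _)
    · exact (continuousOn_const.mul (continuousOn_pow 2)).sub hcont
    · intro x hx
      rw [interior_Icc] at hx
      have := ((hasDerivAt_pow 2 x).const_mul 2).sub (hder x ⟨hx.1.le, hx.2.le⟩)
      exact this.differentiableAt.differentiableWithinAt
    · intro x hx
      rw [interior_Icc] at hx
      have hd := ((hasDerivAt_pow 2 x).const_mul 2).sub (hder x ⟨hx.1.le, hx.2.le⟩)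
      rw [HasDerivAt.deriv (f := fun y => 2*y^2 - Tq q y) hd]
      have hb := hrbound x ⟨hx.1.le, hx.2.le⟩
      have : x * (1-x)^(q-2) ≤ x * 4 :=
        mul_le_mul_of_nonneg_left hb hx.1.le
      norm_num
      nlinarith [hx.1, this]
  intro x hx
  have h0mem : (0:ℝ) ∈ Set.Icc (0:ℝ) (1/2) := by constructor <;> norm_num
  constructor
  · have := hmonoT h0mem hx hx.1
    rwa [hT0] at this
  · have := hmonoF h0mem hx hx.1
    simp only [hT0] at this
    nlinarith [this]

/-- Tsallis DGF on `[0,1]`: at the boundary point `0` the Bregman divergence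
is `Θ(x^{min(q,2)})`, so the Legendre exponent at `0` is `max(0, 1 − q/2)`. -/
theorem tsallis_legendre_exponent_at_zero
    (q : ℝ) (hq : (0 < q ∧ q < 1) ∨ (1 < q ∧ q < 2))
    (D : ℝ → ℝ → ℝ)
    (hD : ∀ x ∈ Set.Ioo (0:ℝ) 1,
      D 0 x = x ^ q / q -
        (1 / (q * (1 - q))) * (1 - (1 - x) ^ q - q * (1 - x) ^ (q - 1) * x)) :
    (∃ c C : ℝ, 0 < c ∧ 0 < C ∧ ∃ δ > (0:ℝ), ∀ x : ℝ, 0 < x → x < δ →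
      c * x ^ min q 2 ≤ D 0 x ∧ D 0 x ≤ C * x ^ min q 2) ∧
    (∃ K ≥ (0:ℝ), ∃ δ > (0:ℝ), ∀ x : ℝ, 0 < x → x < δ →
      D 0 x ≤ K / 2 * |x| ^ (2 * (1 - max 0 (1 - q / 2)))) ∧
    (∀ β : ℝ, 0 ≤ β → β < max 0 (1 - q / 2) →
      ¬ ∃ K ≥ (0:ℝ), ∃ δ > (0:ℝ), ∀ x : ℝ, 0 < x → x < δ →
        D 0 x ≤ K / 2 * |x| ^ (2 * (1 - β))) := by
  have hq0 : 0 < q := by rcases hq with ⟨h, _⟩ | ⟨h, _⟩ <;> linarith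
  have hq2 : q < 2 := by rcases hq with ⟨_, h⟩ | ⟨_, h⟩ <;> linarith
  have hq1 : q ≠ 1 := by rcases hq with ⟨_, h⟩ | ⟨h, _⟩ <;> intro he <;> linarith
  have hmin : min q 2 = q := min_eq_left hq2.le
  have hmax : max 0 (1 - q / 2) = 1 - q / 2 := max_eq_right (by linarith)
  -- key bounds on D 0 x for 0 < x < 1/2
  have key : ∀ x : ℝ, 0 < x → x < 1/2 →
      (1/q) * x ^ q ≤ D 0 x ∧ D 0 x ≤ (1/q + 2) * x ^ q := by
    intro x hx0 hx2
    have hx1 : x ∈ Set.Ioo (0:ℝ) 1 := ⟨hx0, by linarith⟩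
    have hDx : D 0 x = x ^ q / q + Tq q x := by
      rw [hD x hx1, Tq]; ring
    obtain ⟨hT0, hT2⟩ := Tq_bounds q hq0 hq2 hq1 x ⟨hx0.le, hx2.le⟩
    have hx2q : x ^ 2 ≤ x ^ q := by
      have : x ^ (2:ℝ) ≤ x ^ q :=
        Real.rpow_le_rpow_of_exponent_ge hx0 (by linarith) hq2.le
      rwa [show (2:ℝ) = ((2:ℕ):ℝ) by norm_num, Real.rpow_natCast] at this
    constructor
    · rw [hDx]; rw [one_div, inv_mul_eq_div]; linarith
    · rw [hDx]
      have : x ^ q / q = (1/q) * x ^ q := by ring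
      rw [this]; nlinarith
  refine ⟨⟨1/q, 1/q + 2, by positivity, by positivity, 1/2, by norm_num, ?_⟩, ?_, ?_⟩
  · intro x hx0 hxd
    rw [hmin]
    exact key x hx0 hxd
  · refine ⟨2*(1/q + 2), by positivity, 1/2, by norm_num, ?_⟩
    intro x hx0 hxd
    have he : 2 * (1 - max 0 (1 - q / 2)) = q := by rw [hmax]; ring
    rw [he, abs_of_pos hx0]
    have := (key x hx0 hxd).2
    calc D 0 x ≤ (1/q + 2) * x ^ q := this
      _ = 2*(1/q + 2) / 2 * x ^ q := by ring
  · intro β hβ0 hβ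
    rw [hmax] at hβ
    rintro ⟨K, hK, δ, hδ, hbd⟩
    set ε := 2 * (1 - β) - q with hε_def
    have hε : 0 < ε := by simp only [hε_def]; linarith
    -- K/2 * x^ε → 0 as x → 0+
    have hcont : ContinuousAt (fun x : ℝ => K/2 * x ^ ε) 0 :=
      (Real.continuousAt_rpow_const 0 ε (Or.inr hε.le)).const_smul (K/2) |>.congr (by
        filter_upwards with y; simp [smul_eq_mul])
    have htend : Filter.Tendsto (fun x : ℝ => K/2 * x ^ ε) (nhdsWithin 0 (Set.Ioi 0)) (nhds 0) := by
      have := hcont.tendsto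
      rw [show K/2 * (0:ℝ) ^ ε = 0 by simp [Real.zero_rpow hε.ne']] at this
      exact this.mono_left nhdsWithin_le_nhds
    have hev1 : ∀ᶠ x in nhdsWithin (0:ℝ) (Set.Ioi 0), K/2 * x ^ ε < 1/q :=
      htend.eventually (Filter.Tendsto.eventually_lt_const (by positivity) Filter.tendsto_id)
    have hev2 : ∀ᶠ x in nhdsWithin (0:ℝ) (Set.Ioi 0), x < min δ (1/2) :=
      (gt_mem_nhds (lt_min hδ (by norm_num))).filter_mono nhdsWithin_le_nhds
    have hev3 : ∀ᶠ x in nhdsWithin (0:ℝ) (Set.Ioi 0), (0:ℝ) < x :=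
      eventually_mem_nhdsWithin
    obtain ⟨x, h1, h2, h3⟩ := (hev1.and (hev2.and hev3)).exists
    obtain ⟨hxδ, hx2⟩ := lt_min_iff.mp h2
    have hx0 : 0 < x := h3
    have hlow := (key x hx0 hx2).1
    have hup := hbd x hx0 hxδ
    rw [abs_of_pos hx0] at hup
    have hrw : x ^ (2 * (1 - β)) = x ^ ε * x ^ q := by
      rw [← Real.rpow_add hx0]; congr 1; rw [hε_def]; ring
    rw [hrw] at hup
    have hxq : 0 < x ^ q := Real.rpow_pos_of_pos hx0 q
    have : D 0 x < D 0 x := by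
      calc D 0 x ≤ K/2 * (x ^ ε * x ^ q) := hup
        _ = (K/2 * x ^ ε) * x ^ q := by ring
        _ < (1/q) * x ^ q := by exact mul_lt_mul_of_pos_right h1 hxq
        _ ≤ D 0 x := hlow
    exact lt_irrefl _ this
end

section
/- Let h(x) = Σᵢ xᵢ log xᵢ be the negative entropy on the simplex X = {x ∈ ℝ₊ⁿ : Σ xᵢ = 1}, with Kullback–Leibler divergence D(p,x) = Σᵢ pᵢ log(pᵢ/xᵢ). If p lies in the relative interior of X (all pᵢ > 0), then there exist a neighborhood V of p and K > 0 with D(p,x) ≤ (K/2)‖p−x‖² for x ∈ V in the relative interior, i.e. the Legendre exponent at p is 0; whereas if some pᵢ = 0, then D(p,x) ≤ (K/2)‖p−x‖ near p, and this exponent 1/2 is attained, i.e. the Legendre exponent at p is 1/2. -/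
open Real Finset

private lemma key_ineq {a b : ℝ} (ha : 0 ≤ a) (hb : 0 < b) :
    a * Real.log (a / b) ≤ (a - b) + (a - b) ^ 2 / b := by
  rcases ha.eq_or_lt with h | h
  · have : (0 - b) ^ 2 / b = b := by field_simp [pow_two]; ring
    rw [← h, zero_mul, this]; linarith
  · have hlog : Real.log (a / b) ≤ a / b - 1 := Real.log_le_sub_one_of_pos (div_pos h hb)
    calc a * Real.log (a / b) ≤ a * (a / b - 1) :=
          mul_le_mul_of_nonneg_left hlog ha
      _ = (a - b) + (a - b) ^ 2 / b := by field_simp; ring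

private lemma esq {n : ℕ} (y : EuclideanSpace ℝ (Fin n)) :
    ‖y‖ ^ 2 = ∑ i, y i ^ 2 := by
  rw [EuclideanSpace.norm_eq, Real.sq_sqrt (by positivity)]
  simp [Real.norm_eq_abs, sq_abs]

private lemma ecoord {n : ℕ} (y : EuclideanSpace ℝ (Fin n)) (i : Fin n) :
    |y i| ≤ ‖y‖ := by
  have h1 : y i ^ 2 ≤ ‖y‖ ^ 2 := by
    rw [esq]
    exact Finset.single_le_sum (f := fun i => y i ^ 2) (fun i _ => sq_nonneg _) (Finset.mem_univ i)
  calc |y i| = Real.sqrt (y i ^ 2) := (Real.sqrt_sq_eq_abs _).symm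
    _ ≤ Real.sqrt (‖y‖ ^ 2) := Real.sqrt_le_sqrt h1
    _ = ‖y‖ := Real.sqrt_sq (norm_nonneg _)

/-- the basic divergence bound -/
private lemma D_le {n : ℕ} (p x : EuclideanSpace ℝ (Fin n))
    (hp0 : ∀ i, 0 ≤ p i) (hp1 : ∑ i, p i = 1)
    (hx0 : ∀ i, 0 < x i) (hx1 : ∑ i, x i = 1) :
    ∑ i, p i * Real.log (p i / x i) ≤ ∑ i, (p i - x i) ^ 2 / x i := by
  have h1 : ∑ i, p i * Real.log (p i / x i)
      ≤ ∑ i, ((p i - x i) + (p i - x i) ^ 2 / x i) :=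
    Finset.sum_le_sum fun i _ => key_ineq (hp0 i) (hx0 i)
  have h2 : ∑ i, ((p i - x i) + (p i - x i) ^ 2 / x i)
      = ∑ i, (p i - x i) ^ 2 / x i := by
    rw [Finset.sum_add_distrib, Finset.sum_sub_distrib, hp1, hx1]
    ring
  linarith


private lemma aux_interior {n : ℕ}
    (D : EuclideanSpace ℝ (Fin n) → EuclideanSpace ℝ (Fin n) → ℝ)
    (hD : ∀ p x, D p x = ∑ i, p i * Real.log (p i / x i))
    (p : EuclideanSpace ℝ (Fin n))
    (hp0 : ∀ i, 0 ≤ p i) (hp1 : ∑ i, p i = 1) (hpos : ∀ i, 0 < p i) :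
    ∃ V ∈ nhds p, ∃ K > (0:ℝ), ∀ x ∈ V,
      x ∈ {x : EuclideanSpace ℝ (Fin n) | (∀ i, 0 ≤ x i) ∧ ∑ i, x i = 1} → (∀ i, 0 < x i) →
      D p x ≤ K / 2 * ‖p - x‖ ^ 2 := by
  have hjex : ∃ j, 0 < p j := by
    by_contra hcon
    push_neg at hcon
    have hz : ∀ i ∈ Finset.univ, p i = 0 := fun i _ => le_antisymm (hcon i) (hp0 i)
    rw [Finset.sum_congr rfl hz] at hp1
    simp at hp1
  have hne : Nonempty (Fin n) := ⟨hjex.choose⟩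
  have hun : (Finset.univ : Finset (Fin n)).Nonempty := Finset.univ_nonempty
  set δ := Finset.univ.inf' hun p with hδdef
  have hδpos : 0 < δ := by
    rw [hδdef, Finset.lt_inf'_iff]
    exact fun i _ => hpos i
  have hδle : ∀ i, δ ≤ p i := fun i => Finset.inf'_le _ (Finset.mem_univ i)
  refine ⟨Metric.ball p (δ / 2), Metric.ball_mem_nhds _ (by positivity), 4 / δ, by positivity,
    ?_⟩
  rintro x hxV ⟨hx0, hx1⟩ hxpos
  have hnorm : ‖p - x‖ < δ / 2 := by
    rw [← dist_eq_norm]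
    rw [Metric.mem_ball, dist_comm] at hxV
    exact hxV
  have hxlb : ∀ i, δ / 2 ≤ x i := by
    intro i
    have h1 : |(p - x) i| ≤ ‖p - x‖ := ecoord _ i
    have h2 : (p - x) i = p i - x i := by simp
    have := hδle i
    rw [h2] at h1
    rw [abs_le] at h1
    linarith [h1.1]
  rw [hD]
  have h1 := D_le p x hp0 hp1 hxpos hx1
  have h2 : ∑ i, (p i - x i) ^ 2 / x i ≤ ∑ i, (p i - x i) ^ 2 / (δ / 2) := by
    refine Finset.sum_le_sum fun i _ => ?_
    exact div_le_div_of_nonneg_left (sq_nonneg _) (by positivity) (hxlb i)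
  have h3 : ∑ i, (p i - x i) ^ 2 / (δ / 2) = (2 / δ) * ‖p - x‖ ^ 2 := by
    rw [esq]
    have : ∀ i, ((p - x) i) ^ 2 = (p i - x i) ^ 2 := by intro i; simp
    rw [Finset.sum_congr rfl fun i _ => this i, ← Finset.sum_div]
    field_simp
  have h4 : (4 / δ) / 2 * ‖p - x‖ ^ 2 = (2 / δ) * ‖p - x‖ ^ 2 := by ring
  linarith

private lemma aux_bd_upper {n : ℕ}
    (D : EuclideanSpace ℝ (Fin n) → EuclideanSpace ℝ (Fin n) → ℝ)
    (hD : ∀ p x, D p x = ∑ i, p i * Real.log (p i / x i))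
    (p : EuclideanSpace ℝ (Fin n))
    (hp0 : ∀ i, 0 ≤ p i) (hp1 : ∑ i, p i = 1) :
    ∃ V ∈ nhds p, ∃ K > (0:ℝ), ∀ x ∈ V,
      x ∈ {x : EuclideanSpace ℝ (Fin n) | (∀ i, 0 ≤ x i) ∧ ∑ i, x i = 1} → (∀ i, 0 < x i) →
      D p x ≤ K / 2 * ‖p - x‖ := by
  classical
  have hjex : ∃ j, 0 < p j := by
    by_contra hcon
    push_neg at hcon
    have hz : ∀ i ∈ Finset.univ, p i = 0 := fun i _ => le_antisymm (hcon i) (hp0 i)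
    rw [Finset.sum_congr rfl hz] at hp1
    simp at hp1
  obtain ⟨j, hj⟩ := hjex
  set S : Finset (Fin n) := Finset.univ.filter (fun i => p i ≠ 0) with hSdef
  have hSne : S.Nonempty := ⟨j, by simp [hSdef, hj.ne']⟩
  set δ := S.inf' hSne p with hδdef
  have hδpos : 0 < δ := by
    rw [hδdef, Finset.lt_inf'_iff]
    intro i hi
    rw [hSdef, Finset.mem_filter] at hi
    exact (hp0 i).lt_of_ne (Ne.symm hi.2)
  have hδle : ∀ i, p i ≠ 0 → δ ≤ p i := fun i hi =>
    Finset.inf'_le _ (by simp [hSdef, hi])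
  have hn : (0:ℝ) < n := by
    have : 0 < n := Fin.pos j
    exact_mod_cast this
  refine ⟨Metric.ball p (δ / 2), Metric.ball_mem_nhds _ (by positivity),
    2 * n, by linarith, ?_⟩
  rintro x hxV ⟨hx0, hx1⟩ hxpos
  have hnorm : ‖p - x‖ < δ / 2 := by
    rw [← dist_eq_norm]
    rw [Metric.mem_ball, dist_comm] at hxV
    exact hxV
  have hcoord : ∀ i, |p i - x i| ≤ ‖p - x‖ := by
    intro i
    have h1 : |(p - x) i| ≤ ‖p - x‖ := ecoord _ i
    simpa using h1
  rw [hD]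
  have h1 := D_le p x hp0 hp1 hxpos hx1
  have h2 : ∀ i, (p i - x i) ^ 2 / x i ≤ ‖p - x‖ := by
    intro i
    by_cases hpi : p i = 0
    · have : (p i - x i) ^ 2 / x i = x i := by
        rw [hpi, zero_sub, neg_sq, pow_two, mul_div_assoc, div_self (hxpos i).ne', mul_one]
      rw [this]
      calc x i = |p i - x i| := by rw [hpi, abs_sub_comm]; simp [abs_of_pos (hxpos i)]
        _ ≤ ‖p - x‖ := hcoord i
    · have hxi : δ / 2 ≤ x i := by
        have := hδle i hpi
        have h1 := hcoord i
        rw [abs_le] at h1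
        linarith [h1.1]
      have hsq : (p i - x i) ^ 2 ≤ ‖p - x‖ * (δ / 2) := by
        have hle : |p i - x i| ≤ ‖p - x‖ := hcoord i
        calc (p i - x i) ^ 2 = |p i - x i| * |p i - x i| := by
              rw [← abs_mul, ← pow_two, abs_of_nonneg (sq_nonneg _)]
          _ ≤ ‖p - x‖ * (δ / 2) :=
              mul_le_mul hle (le_of_lt (lt_of_le_of_lt hle hnorm)) (abs_nonneg _) (norm_nonneg _)
      calc (p i - x i) ^ 2 / x i ≤ (p i - x i) ^ 2 / (δ / 2) :=
            div_le_div_of_nonneg_left (sq_nonneg _) (by positivity) hxi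
        _ ≤ (‖p - x‖ * (δ / 2)) / (δ / 2) := by
            apply div_le_div_of_nonneg_right hsq (by positivity)
        _ = ‖p - x‖ := by field_simp
  have h3 : ∑ i, (p i - x i) ^ 2 / x i ≤ ∑ _i : Fin n, ‖p - x‖ :=
    Finset.sum_le_sum fun i _ => h2 i
  have h4 : ∑ _i : Fin n, ‖p - x‖ = n * ‖p - x‖ := by
    rw [Finset.sum_const, Finset.card_univ, Fintype.card_fin, nsmul_eq_mul]
  have h5 : (2 * (n:ℝ)) / 2 * ‖p - x‖ = n * ‖p - x‖ := by ring
  linarith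

set_option maxHeartbeats 1000000 in
private lemma aux_bd_lower {n : ℕ}
    (D : EuclideanSpace ℝ (Fin n) → EuclideanSpace ℝ (Fin n) → ℝ)
    (hD : ∀ p x, D p x = ∑ i, p i * Real.log (p i / x i))
    (p : EuclideanSpace ℝ (Fin n))
    (hp0 : ∀ i, 0 ≤ p i) (hp1 : ∑ i, p i = 1) (hbd : ∃ i, p i = 0) :
      (∀ β : ℝ, 0 ≤ β → β < 1/2 →
        ¬ ∃ V ∈ nhds p, ∃ K ≥ (0:ℝ), ∀ x ∈ V,
          x ∈ {x : EuclideanSpace ℝ (Fin n) | (∀ i, 0 ≤ x i) ∧ ∑ i, x i = 1} →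
          (∀ i, 0 < x i) →
          D p x ≤ K / 2 * ‖p - x‖ ^ (2 * (1 - β))) := by
  classical
  obtain ⟨i₀, hi₀⟩ := hbd
  have hjex : ∃ j, 0 < p j := by
    by_contra hcon
    push_neg at hcon
    have hz : ∀ i ∈ Finset.univ, p i = 0 := fun i _ => le_antisymm (hcon i) (hp0 i)
    rw [Finset.sum_congr rfl hz] at hp1
    simp at hp1
  obtain ⟨j, hj⟩ := hjex
  set Z : Finset (Fin n) := Finset.univ.filter (fun i => p i = 0) with hZdef
  have hi₀Z : i₀ ∈ Z := by simp [hZdef, hi₀]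
  set m : ℕ := Z.card with hmdef
  have hm0 : 0 < m := Finset.card_pos.mpr ⟨i₀, hi₀Z⟩
  have hmR : (1:ℝ) ≤ m := by exact_mod_cast hm0
  have hmR0 : (0:ℝ) < m := by linarith
  have hnR : (1:ℝ) ≤ n := by
    have : 0 < n := Fin.pos j
    exact_mod_cast this
  intro β hβ0 hβ
  rintro ⟨V, hV, K, hK, hbound⟩
  obtain ⟨ε, hε, hball⟩ := Metric.mem_nhds_iff.mp hV
  set e : ℝ := 2 * (1 - β) with hedef
  have he1 : 1 < e := by rw [hedef]; linarith
  have he0 : 0 < e := by linarith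
  set C : ℝ := K / 2 * (n:ℝ) ^ e with hCdef
  have hC0 : 0 ≤ C := by
    apply mul_nonneg (by linarith)
    exact Real.rpow_nonneg (by linarith) _
  -- choose t, made opaque immediately
  obtain ⟨t, ht0, htpj, htε, htC⟩ :
      ∃ t : ℝ, 0 < t ∧ t < p j ∧ t ≤ ε / (n + 1) ∧ t ^ (e - 1) ≤ (C + 1)⁻¹ := by
    refine ⟨min (min (p j / 2) (ε / (n + 1))) ((C + 1)⁻¹ ^ (e - 1)⁻¹), ?_, ?_, ?_, ?_⟩
    · apply lt_min (lt_min (by linarith) (by positivity))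
      exact Real.rpow_pos_of_pos (by positivity) _
    · calc min (min (p j / 2) (ε / (n + 1))) ((C + 1)⁻¹ ^ (e - 1)⁻¹)
          ≤ p j / 2 := le_trans (min_le_left _ _) (min_le_left _ _)
        _ < p j := by linarith
    · exact le_trans (min_le_left _ _) (min_le_right _ _)
    · set s := min (min (p j / 2) (ε / (n + 1))) ((C + 1)⁻¹ ^ (e - 1)⁻¹) with hsdef
      have hs0 : 0 < s := by
        apply lt_min (lt_min (by linarith) (by positivity))
        exact Real.rpow_pos_of_pos (by positivity) _
      have hs1 : s ≤ (C + 1)⁻¹ ^ (e - 1)⁻¹ := min_le_right _ _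
      have h10 : s ^ (e - 1) ≤ ((C + 1)⁻¹ ^ (e - 1)⁻¹) ^ (e - 1) :=
        Real.rpow_le_rpow (le_of_lt hs0) hs1 (by linarith)
      have h11 : ((C + 1)⁻¹ ^ (e - 1)⁻¹) ^ (e - 1) = (C + 1)⁻¹ := by
        rw [← Real.rpow_mul (by positivity), inv_mul_cancel₀
          (ne_of_gt (by linarith : (0:ℝ) < e - 1)), Real.rpow_one]
      linarith
  -- the test point
  set x : EuclideanSpace ℝ (Fin n) :=
    WithLp.toLp 2 (fun i => if p i = 0 then t / m else if i = j then p j - t else p i) with hxdef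
  have hxapp : ∀ i, x i = if p i = 0 then t / (m:ℝ) else if i = j then p j - t else p i :=
    fun i => (congrArg (fun y : EuclideanSpace ℝ (Fin n) => y i) hxdef).trans rfl
  clear_value x
  clear hxdef
  have hxpos : ∀ i, 0 < x i := by
    intro i
    rw [hxapp]
    by_cases h1 : p i = 0
    · rw [if_pos h1]; positivity
    · rw [if_neg h1]
      by_cases h2 : i = j
      · rw [if_pos h2]; linarith
      · rw [if_neg h2]; exact (hp0 i).lt_of_ne (Ne.symm h1)
  have hdiff : ∀ i, x i - p i
      = (if p i = 0 then t / (m:ℝ) else 0) + (if i = j then -t else 0) := by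
    intro i
    rw [hxapp]
    by_cases h1 : p i = 0
    · have h2 : i ≠ j := by rintro rfl; rw [h1] at hj; exact lt_irrefl _ hj
      rw [if_pos h1, if_pos h1, if_neg h2, h1]; ring
    · rw [if_neg h1, if_neg h1]
      by_cases h2 : i = j
      · subst h2; rw [if_pos rfl, if_pos rfl]; ring
      · rw [if_neg h2, if_neg h2]; ring
  have hsum : ∑ i, x i = 1 := by
    have h1 : ∑ i, (x i - p i) = 0 := by
      rw [Finset.sum_congr rfl fun i _ => hdiff i, Finset.sum_add_distrib]
      rw [Finset.sum_ite_eq' Finset.univ j (fun _ => -t)]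
      have h2 : ∑ i, (if p i = 0 then t / (m:ℝ) else 0) = (m:ℝ) * (t / m) := by
        rw [← Finset.sum_filter, Finset.sum_const, nsmul_eq_mul, ← hZdef, ← hmdef]
      rw [h2, if_pos (Finset.mem_univ j)]
      field_simp; ring
    have h2 : ∑ i, (x i - p i) = ∑ i, x i - ∑ i, p i := Finset.sum_sub_distrib (fun i => x i) (fun i => p i)
    rw [h2, hp1] at h1
    linarith
  -- lower bound on D
  have hDval : t ≤ D p x := by
    rw [hD]
    have h1 : ∑ i, p i * Real.log (p i / x i) = p j * Real.log (p j / (p j - t)) := by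
      rw [Finset.sum_eq_single j]
      · rw [hxapp, if_neg hj.ne', if_pos rfl]
      · intro i _ hij
        by_cases h1 : p i = 0
        · rw [h1, zero_mul]
        · rw [hxapp, if_neg h1, if_neg hij, div_self h1, Real.log_one, mul_zero]
      · intro h; exact absurd (Finset.mem_univ j) h
    rw [h1]
    have hpt : 0 < p j - t := by linarith
    have h2 : Real.log ((p j - t) / p j) ≤ (p j - t) / p j - 1 :=
      Real.log_le_sub_one_of_pos (by positivity)
    have h3 : Real.log (p j / (p j - t)) = - Real.log ((p j - t) / p j) := by
      rw [← Real.log_inv]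
      congr 1
      field_simp
    have h4 : t / p j ≤ Real.log (p j / (p j - t)) := by
      rw [h3]
      have h5 : (p j - t) / p j - 1 = - (t / p j) := by field_simp; ring
      linarith
    calc t = p j * (t / p j) := by field_simp
      _ ≤ p j * Real.log (p j / (p j - t)) := mul_le_mul_of_nonneg_left h4 (le_of_lt hj)
  -- norm bound
  have hnormb : ‖p - x‖ ≤ n * t := by
    have h1 : ‖p - x‖ ^ 2 ≤ ((n:ℝ) * t) ^ 2 := by
      rw [esq]
      have h2 : ∀ i, ((p - x) i) ^ 2 ≤ t ^ 2 := by
        intro i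
        have hpx : (p - x) i = p i - x i := by simp
        rw [hpx, hxapp]
        by_cases h1 : p i = 0
        · rw [if_pos h1, h1]
          have he : (0 - t / (m:ℝ)) ^ 2 = (t / m) ^ 2 := by ring
          rw [he]
          have htm : t / (m:ℝ) ≤ t := by
            rw [div_le_iff₀ hmR0]; nlinarith
          have htm0 : 0 ≤ t / (m:ℝ) := by positivity
          exact pow_le_pow_left₀ htm0 htm 2
        · rw [if_neg h1]
          by_cases h2 : i = j
          · subst h2
            rw [if_pos rfl]
            have he : (p i - (p i - t)) ^ 2 = t ^ 2 := by ring
            rw [he]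
          · rw [if_neg h2]
            have he : p i - p i = 0 := by ring
            rw [he]
            simpa using sq_nonneg t
      calc ∑ i, ((p - x) i) ^ 2 ≤ ∑ _i : Fin n, t ^ 2 := Finset.sum_le_sum fun i _ => h2 i
        _ = n * t ^ 2 := by rw [Finset.sum_const, Finset.card_univ, Fintype.card_fin, nsmul_eq_mul]
        _ ≤ ((n:ℝ) * t) ^ 2 := by nlinarith
    calc ‖p - x‖ = Real.sqrt (‖p - x‖ ^ 2) := (Real.sqrt_sq (norm_nonneg _)).symm
      _ ≤ Real.sqrt (((n:ℝ) * t) ^ 2) := Real.sqrt_le_sqrt h1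
      _ = (n:ℝ) * t := Real.sqrt_sq (by positivity)
  -- membership in the ball
  have hmem : x ∈ Metric.ball p ε := by
    rw [Metric.mem_ball, dist_eq_norm, norm_sub_rev]
    calc ‖p - x‖ ≤ (n:ℝ) * t := hnormb
      _ ≤ (n:ℝ) * (ε / (n + 1)) := mul_le_mul_of_nonneg_left htε (by linarith)
      _ = ε * ((n:ℝ) / (n + 1)) := by ring
      _ < ε * 1 := by
          apply mul_lt_mul_of_pos_left _ hε
          rw [div_lt_one (by linarith)]
          linarith
      _ = ε := mul_one ε
  -- apply the hypothesized bound and derive a contradiction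
  have happ := hbound x (hball hmem) ⟨fun i => le_of_lt (hxpos i), hsum⟩ hxpos
  have hrpow : ‖p - x‖ ^ e ≤ ((n:ℝ) * t) ^ e :=
    Real.rpow_le_rpow (norm_nonneg _) hnormb (le_of_lt he0)
  have hmul : ((n:ℝ) * t) ^ e = (n:ℝ) ^ e * t ^ e :=
    Real.mul_rpow (by linarith) (le_of_lt ht0)
  have hchain : t ≤ C * t ^ e := by
    have h5 : K / 2 * ‖p - x‖ ^ e ≤ K / 2 * ((n:ℝ) ^ e * t ^ e) := by
      rw [← hmul]
      exact mul_le_mul_of_nonneg_left hrpow (by linarith)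
    have h6 : K / 2 * ((n:ℝ) ^ e * t ^ e) = C * t ^ e := by rw [hCdef]; ring
    linarith
  have hte : t ^ e = t ^ (e - 1) * t := by
    have h0 : e = (e - 1) + 1 := by ring
    nth_rewrite 1 [h0]
    rw [Real.rpow_add ht0, Real.rpow_one]
  have h7 : 1 * t ≤ (C * t ^ (e - 1)) * t := by
    rw [one_mul, mul_assoc, ← hte]
    exact hchain
  have h8 : (1:ℝ) ≤ C * t ^ (e - 1) := le_of_mul_le_mul_right h7 ht0
  have h12 : C * t ^ (e - 1) ≤ C * (C + 1)⁻¹ :=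
    mul_le_mul_of_nonneg_left htC hC0
  have h13 : C * (C + 1)⁻¹ < 1 := by
    rw [← div_eq_mul_inv, div_lt_one (by linarith)]
    linarith
  linarith

/-- Legendre exponent of the negative entropy on the simplex: `0` at interior
points, `1/2` at boundary points. -/
theorem entropy_simplex_legendre_exponent
    {n : ℕ}
    (X : Set (EuclideanSpace ℝ (Fin n)))
    (hX : X = {x : EuclideanSpace ℝ (Fin n) | (∀ i, 0 ≤ x i) ∧ ∑ i, x i = 1})
    (D : EuclideanSpace ℝ (Fin n) → EuclideanSpace ℝ (Fin n) → ℝ)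
    (hD : ∀ p x, D p x = ∑ i, p i * Real.log (p i / x i))
    (p : EuclideanSpace ℝ (Fin n)) (hp : p ∈ X) :
    ((∀ i, 0 < p i) →
      ∃ V ∈ nhds p, ∃ K > (0:ℝ), ∀ x ∈ V, x ∈ X → (∀ i, 0 < x i) →
        D p x ≤ K / 2 * ‖p - x‖ ^ 2) ∧
    ((∃ i, p i = 0) →
      (∃ V ∈ nhds p, ∃ K > (0:ℝ), ∀ x ∈ V, x ∈ X → (∀ i, 0 < x i) →
        D p x ≤ K / 2 * ‖p - x‖) ∧
      (∀ β : ℝ, 0 ≤ β → β < 1/2 →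
        ¬ ∃ V ∈ nhds p, ∃ K ≥ (0:ℝ), ∀ x ∈ V, x ∈ X → (∀ i, 0 < x i) →
          D p x ≤ K / 2 * ‖p - x‖ ^ (2 * (1 - β)))) := by
  subst hX
  obtain ⟨hp0, hp1⟩ := hp
  exact ⟨fun hpos => aux_interior D hD p hp0 hp1 hpos,
    fun hbd => ⟨aux_bd_upper D hD p hp0 hp1, aux_bd_lower D hD p hp0 hp1 hbd⟩⟩
end

section
/- Let X be the closed unit Euclidean ball in ℝⁿ and h(x) = −√(1 − ‖x‖²) the Hellinger regularizer, with Bregman divergence D(p,x) = (1 − Σᵢ pᵢxᵢ)/√(1 − ‖x‖²) for ‖p‖ = 1 and ‖x‖ < 1. Then h fails Bregman reciprocity at boundary points: for every p with ‖p‖ = 1 and every r > 0 there exists a sequence xₙ with ‖xₙ‖ < 1, ‖xₙ − p‖ → 0, and D(p, xₙ) = r for all n. -/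
open Real Filter
open scoped RealInnerProductSpace

/-- Failure of Bregman reciprocity for the Hellinger regularizer on the unit
ball of `ℝⁿ` (`n ≥ 2`): at any boundary point `p` and for any level `r > 0`
there is a sequence converging to `p` in norm that stays on the Hellinger
sphere of radius `r` around `p`. -/
theorem hellinger_reciprocity_failure
    {n : ℕ} (hn : 2 ≤ n)
    (D : EuclideanSpace ℝ (Fin n) → EuclideanSpace ℝ (Fin n) → ℝ)
    (hD : ∀ p x : EuclideanSpace ℝ (Fin n), ‖p‖ = 1 → ‖x‖ < 1 →
      D p x = (1 - ∑ i, p i * x i) / Real.sqrt (1 - ‖x‖ ^ 2)) :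
    ∀ p : EuclideanSpace ℝ (Fin n), ‖p‖ = 1 → ∀ r : ℝ, 0 < r →
      ∃ x : ℕ → EuclideanSpace ℝ (Fin n),
        (∀ k, ‖x k‖ < 1) ∧
        Tendsto (fun k => ‖x k - p‖) atTop (nhds 0) ∧
        ∀ k, D p (x k) = r := by
  intro p hp r hr
  have hp0 : p ≠ 0 := by
    intro h; rw [h, norm_zero] at hp; norm_num at hp
  -- get q orthogonal to p with norm 1
  obtain ⟨q, hpq, hq⟩ : ∃ q : EuclideanSpace ℝ (Fin n), (inner ℝ p q : ℝ) = 0 ∧ ‖q‖ = 1 := by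
    have hdim : 0 < Module.finrank ℝ (ℝ ∙ p)ᗮ := by
      have h1 : Module.finrank ℝ (ℝ ∙ p) + Module.finrank ℝ (ℝ ∙ p)ᗮ
          = Module.finrank ℝ (EuclideanSpace ℝ (Fin n)) :=
        Submodule.finrank_add_finrank_orthogonal _
      rw [finrank_span_singleton hp0, finrank_euclideanSpace_fin] at h1
      omega
    have : Nontrivial ((ℝ ∙ p)ᗮ : Submodule ℝ (EuclideanSpace ℝ (Fin n))) :=
      Module.nontrivial_of_finrank_pos hdim
    obtain ⟨v, hv⟩ := exists_ne (0 : (ℝ ∙ p)ᗮ)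
    have hv0 : (v : EuclideanSpace ℝ (Fin n)) ≠ 0 := by
      simpa using Subtype.coe_injective.ne hv
    refine ⟨‖(v : EuclideanSpace ℝ (Fin n))‖⁻¹ • (v : EuclideanSpace ℝ (Fin n)), ?_, ?_⟩
    · rw [inner_smul_right]
      have : (inner ℝ p (v : EuclideanSpace ℝ (Fin n)) : ℝ) = 0 := by
        have := v.2
        rw [Submodule.mem_orthogonal] at this
        exact this p (Submodule.mem_span_singleton_self p)
      rw [this, mul_zero]
    · rw [norm_smul, norm_inv, norm_norm, inv_mul_cancel₀ (norm_ne_zero_iff.mpr hv0)]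
  set c : ℝ := min (r ^ 2) 1 / 2 with hc
  have hcpos : 0 < c := by positivity
  have hcr : c ≤ r ^ 2 / 2 := by
    rw [hc]; gcongr; exact min_le_left _ _
  have hc1 : c ≤ 1 / 2 := by
    rw [hc]; gcongr; exact min_le_right _ _
  set ε : ℕ → ℝ := fun k => c / (k + 2) with hε
  have hεpos : ∀ k, 0 < ε k := fun k => by positivity
  have hεle : ∀ k, ε k ≤ c / 2 := by
    intro k
    apply div_le_div_of_nonneg_left hcpos.le (by norm_num)
    linarith [Nat.cast_nonneg (α := ℝ) k]
  have hεquarter : ∀ k, ε k ≤ 1 / 4 := fun k => le_trans (hεle k) (by linarith)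
  have hεr : ∀ k, ε k / r ^ 2 ≤ 1 / 4 := by
    intro k
    rw [div_le_iff₀ (by positivity)]
    calc ε k ≤ c / 2 := hεle k
    _ ≤ r ^ 2 / 4 := by linarith
    _ = 1 / 4 * r ^ 2 := by ring
  set A : ℕ → ℝ := fun k => ε k * (2 - ε k - ε k / r ^ 2) with hA
  have hApos : ∀ k, 0 < A k := by
    intro k
    apply mul_pos (hεpos k)
    have := hεquarter k; have := hεr k; linarith
  have hAle : ∀ k, A k ≤ 2 * ε k := by
    intro k
    rw [hA]
    have h1 : 2 - ε k - ε k / r ^ 2 ≤ 2 := by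
      have := (hεpos k).le
      have : 0 ≤ ε k / r ^ 2 := by positivity
      linarith [(hεpos k).le]
    nlinarith [(hεpos k).le]
  set s : ℕ → ℝ := fun k => Real.sqrt (A k) with hs
  have hs2 : ∀ k, s k ^ 2 = A k := fun k => Real.sq_sqrt (hApos k).le
  set x : ℕ → EuclideanSpace ℝ (Fin n) := fun k => (1 - ε k) • p + s k • q with hx
  -- norm squared of x k
  have hnx2 : ∀ k, ‖x k‖ ^ 2 = 1 - ε k ^ 2 / r ^ 2 := by
    intro k
    have hinner : (inner ℝ ((1 - ε k) • p) (s k • q) : ℝ) = 0 := by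
      rw [real_inner_smul_left, real_inner_smul_right, hpq]; ring
    rw [hx]
    rw [@norm_add_sq_real, hinner, norm_smul, norm_smul, hp, hq]
    simp only [mul_one, Real.norm_eq_abs, sq_abs]
    rw [hs2 k, hA]
    have hr2 : r ^ 2 ≠ 0 := by positivity
    field_simp
    ring
  have hnxlt : ∀ k, ‖x k‖ < 1 := by
    intro k
    have h2 : ‖x k‖ ^ 2 < 1 := by
      rw [hnx2 k]
      have : 0 < ε k ^ 2 / r ^ 2 := by positivity
      linarith
    nlinarith [norm_nonneg (x k)]
  -- inner product
  have hsum : ∀ k, ∑ i, p i * (x k) i = 1 - ε k := by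
    intro k
    have : ∑ i, p i * (x k) i = (inner ℝ p (x k) : ℝ) := by
      rw [PiLp.inner_apply]; simp [mul_comm]
    rw [this, hx, inner_add_right, real_inner_smul_right, real_inner_smul_right, hpq,
      real_inner_self_eq_norm_sq, hp]
    ring
  -- value of D
  have hDval : ∀ k, D p (x k) = r := by
    intro k
    rw [hD p (x k) hp (hnxlt k), hsum k, hnx2 k]
    have h1 : (1 : ℝ) - (1 - ε k ^ 2 / r ^ 2) = (ε k / r) ^ 2 := by
      field_simp
      ring
    rw [h1, Real.sqrt_sq (by positivity)]
    field_simp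
    rw [sub_sub_cancel, div_self (hεpos k).ne']
  refine ⟨x, hnxlt, ?_, hDval⟩
  -- convergence
  have hε0 : Tendsto ε atTop (nhds 0) := by
    have : Tendsto (fun k : ℕ => c / (k + 2)) atTop (nhds 0) := by
      apply Tendsto.div_atTop tendsto_const_nhds
      apply tendsto_atTop_add_const_right
      exact tendsto_natCast_atTop_atTop
    exact this
  have hs0 : Tendsto s atTop (nhds 0) := by
    have hA0 : Tendsto A atTop (nhds 0) := by
      apply squeeze_zero (fun k => (hApos k).le) hAle
      simpa using hε0.const_mul 2
    have := hA0.sqrt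
    simpa using this
  have hx0 : Tendsto x atTop (nhds p) := by
    have h1 : Tendsto (fun k => (1 - ε k) • p) atTop (nhds ((1 - (0:ℝ)) • p)) := by
      exact ((tendsto_const_nhds.sub hε0).smul_const p)
    have h2 : Tendsto (fun k => s k • q) atTop (nhds ((0:ℝ) • q)) :=
      hs0.smul_const q
    have := h1.add h2
    simpa using this
  have : Tendsto (fun k => x k - p) atTop (nhds 0) := by
    simpa using hx0.sub (tendsto_const_nhds (x := p))
  simpa using this.norm
end
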